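/- For every ξ ∈ (−1/8, 0), the function θ₁₂(x) = √3·(x − 1/x)·(ξ − 1/((x − 1/x)² + 1)) on ℝ∖{0} has derivative equal to zero at each of the eight points ±p₀(ξ), ±1/p₀(ξ), ±p₁(ξ), ±1/p₁(ξ), where pᵢ(ξ) = (√(κᵢ(ξ)² + 4) − κᵢ(ξ))/2. In particular, pᵢ(ξ) − 1/pᵢ(ξ) = −κᵢ(ξ) for i = 0, 1. -/

import Mathlib

open Real

lemma p_prop (κ : ℝ) (hκ : 0 ≤ κ) :
    0 < (Real.sqrt (κ^2+4) - κ)/2 ∧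
    (Real.sqrt (κ^2+4) - κ)/2 - 1/((Real.sqrt (κ^2+4) - κ)/2) = -κ := by
  have hs : Real.sqrt (κ^2+4) ^ 2 = κ^2+4 := Real.sq_sqrt (by positivity)
  have hs0 : 0 ≤ Real.sqrt (κ^2+4) := Real.sqrt_nonneg _
  have hgt : κ < Real.sqrt (κ^2+4) := by nlinarith
  have hpos : 0 < (Real.sqrt (κ^2+4) - κ)/2 := by linarith
  refine ⟨hpos, ?_⟩
  have hmul : ((Real.sqrt (κ^2+4) - κ)/2) * ((Real.sqrt (κ^2+4) + κ)/2) = 1 := by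
    linear_combination hs / 4
  have hinv : (Real.sqrt (κ^2+4) + κ)/2 = 1 / ((Real.sqrt (κ^2+4) - κ)/2) :=
    eq_one_div_of_mul_eq_one_left (by linarith [hmul])
  rw [← hinv]; ring

lemma crit (ξ κ x : ℝ) (hx : x ≠ 0)
    (hsq : (x - 1/x)^2 = κ^2)
    (hquad : ξ * (κ^2+1)^2 + κ^2 - 1 = 0) :
    HasDerivAt (fun y : ℝ => Real.sqrt 3 * (y - 1 / y) * (ξ - 1 / ((y - 1 / y) ^ 2 + 1))) 0 x := by
  have h1 : HasDerivAt (fun y : ℝ => y - 1/y) (1 + 1/x^2) x := by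
    have := (hasDerivAt_id x).sub (hasDerivAt_inv hx)
    simp only [one_div]
    refine this.congr_deriv ?_
    ring
  have hu1 : (x - 1/x)^2 + 1 ≠ 0 := by positivity
  have h2 : HasDerivAt (fun y : ℝ => (y - 1/y)^2 + 1) ((2:ℕ) * (x - 1/x)^1 * (1 + 1/x^2)) x :=
    (h1.pow 2).add_const 1
  have h3 := h2.inv hu1
  have h4 := (hasDerivAt_const x ξ).sub h3
  have h5 := (h1.const_mul (Real.sqrt 3)).mul h4
  simp only [one_div] at h5 hsq ⊢
  refine h5.congr_deriv (Eq.symm ?_)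
  have hne : ((x - x⁻¹)^2 + 1) ≠ 0 := by positivity
  have key : ξ - ((x - x⁻¹)^2 + 1)⁻¹ + 2*(x - x⁻¹)^2 * (((x - x⁻¹)^2 + 1)^2)⁻¹ = 0 := by
    rw [hsq]
    have hne' : (κ:ℝ)^2 + 1 ≠ 0 := by positivity
    field_simp
    linear_combination hquad
  calc (0:ℝ) = Real.sqrt 3 * (1 + (x^2)⁻¹) *
        (ξ - ((x - x⁻¹)^2 + 1)⁻¹ + 2*(x - x⁻¹)^2 * (((x - x⁻¹)^2 + 1)^2)⁻¹) := by
        rw [key]; ring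
    _ = _ := by simp only [Pi.sub_apply, Pi.inv_apply]; push_cast; field_simp; ring

lemma crit4 (ξ κ p : ℝ) (hp : 0 < p) (heq : p - 1/p = -κ)
    (hquad : ξ * (κ^2+1)^2 + κ^2 - 1 = 0) :
    ∀ x ∈ ({p, -p, 1/p, -(1/p)} : Set ℝ),
      HasDerivAt (fun y : ℝ => Real.sqrt 3 * (y - 1 / y) * (ξ - 1 / ((y - 1 / y) ^ 2 + 1))) 0 x := by
  have hp0 : p ≠ 0 := ne_of_gt hp
  have hip0 : 1/p ≠ 0 := one_div_ne_zero hp0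
  intro x hx
  simp only [Set.mem_insert_iff, Set.mem_singleton_iff] at hx
  rcases hx with rfl|rfl|rfl|rfl
  · exact crit ξ κ _ hp0 (by rw [heq]; ring) hquad
  · exact crit ξ κ _ (neg_ne_zero.mpr hp0)
      (by rw [div_neg, show -p - -(1/p) = -(p - 1/p) from by ring, heq]; ring) hquad
  · exact crit ξ κ _ hip0
      (by rw [one_div_one_div, show 1/p - p = -(p - 1/p) from by ring, heq]; ring) hquad
  · exact crit ξ κ _ (neg_ne_zero.mpr hip0)
      (by rw [div_neg, one_div_one_div, show -(1/p) - -p = p - 1/p from by ring, heq]; ring) hquad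

theorem saddle_points_critical (ξ : ℝ) (hξ : ξ ∈ Set.Ioo (-(1:ℝ)/8) 0) :
    let κ₀ : ℝ := Real.sqrt ((Real.sqrt (1 + 8*ξ) - 1 - 2*ξ) / (2*ξ))
    let κ₁ : ℝ := Real.sqrt (-(Real.sqrt (1 + 8*ξ) + 1 + 2*ξ) / (2*ξ))
    let p₀ : ℝ := (Real.sqrt (κ₀^2 + 4) - κ₀) / 2
    let p₁ : ℝ := (Real.sqrt (κ₁^2 + 4) - κ₁) / 2
    (∀ x ∈ ({p₀, -p₀, 1/p₀, -(1/p₀), p₁, -p₁, 1/p₁, -(1/p₁)} : Set ℝ),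
      HasDerivAt (fun y : ℝ => Real.sqrt 3 * (y - 1 / y) * (ξ - 1 / ((y - 1 / y) ^ 2 + 1)))
        0 x) ∧
    p₀ - 1/p₀ = -κ₀ ∧ p₁ - 1/p₁ = -κ₁ := by
  obtain ⟨hξ1, hξ2⟩ := hξ
  intro κ₀ κ₁ p₀ p₁
  have hξ0 : ξ ≠ 0 := ne_of_lt hξ2
  have h8 : (0:ℝ) ≤ 1 + 8*ξ := by linarith
  have hs : Real.sqrt (1 + 8*ξ) ^ 2 = 1 + 8*ξ := Real.sq_sqrt h8
  have hs0 : 0 ≤ Real.sqrt (1 + 8*ξ) := Real.sqrt_nonneg _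
  have h12 : 0 < 1 + 2*ξ := by linarith
  have hsle : Real.sqrt (1 + 8*ξ) ≤ 1 + 2*ξ := by nlinarith
  have harg₀ : 0 ≤ (Real.sqrt (1 + 8*ξ) - 1 - 2*ξ)/(2*ξ) := by
    rw [div_nonneg_iff]; right; constructor <;> nlinarith
  have harg₁ : 0 ≤ -(Real.sqrt (1 + 8*ξ) + 1 + 2*ξ)/(2*ξ) := by
    rw [div_nonneg_iff]; right; constructor <;> nlinarith
  have hκ₀sq : κ₀^2 = (Real.sqrt (1 + 8*ξ) - 1 - 2*ξ)/(2*ξ) := Real.sq_sqrt harg₀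
  have hκ₁sq : κ₁^2 = -(Real.sqrt (1 + 8*ξ) + 1 + 2*ξ)/(2*ξ) := Real.sq_sqrt harg₁
  have hquad₀ : ξ * (κ₀^2+1)^2 + κ₀^2 - 1 = 0 := by
    rw [hκ₀sq]; field_simp; linear_combination (Real.sq_sqrt (by linarith : (0:ℝ) ≤ 1 + ξ*8))
  have hquad₁ : ξ * (κ₁^2+1)^2 + κ₁^2 - 1 = 0 := by
    rw [hκ₁sq]; field_simp; linear_combination (Real.sq_sqrt (by linarith : (0:ℝ) ≤ 1 + ξ*8))
  obtain ⟨hp₀pos, hp₀eq⟩ := p_prop κ₀ (Real.sqrt_nonneg _)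
  obtain ⟨hp₁pos, hp₁eq⟩ := p_prop κ₁ (Real.sqrt_nonneg _)
  refine ⟨?_, hp₀eq, hp₁eq⟩
  intro x hx
  simp only [Set.mem_insert_iff, Set.mem_singleton_iff] at hx
  rcases hx with rfl|rfl|rfl|rfl|rfl|rfl|rfl|rfl
  · exact crit4 ξ κ₀ p₀ hp₀pos hp₀eq hquad₀ _ (by simp)
  · exact crit4 ξ κ₀ p₀ hp₀pos hp₀eq hquad₀ _ (by simp)
  · exact crit4 ξ κ₀ p₀ hp₀pos hp₀eq hquad₀ _ (by simp)
  · exact crit4 ξ κ₀ p₀ hp₀pos hp₀eq hquad₀ _ (by simp)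
  · exact crit4 ξ κ₁ p₁ hp₁pos hp₁eq hquad₁ _ (by simp)
  · exact crit4 ξ κ₁ p₁ hp₁pos hp₁eq hquad₁ _ (by simp)
  · exact crit4 ξ κ₁ p₁ hp₁pos hp₁eq hquad₁ _ (by simp)
  · exact crit4 ξ κ₁ p₁ hp₁pos hp₁eq hquad₁ _ (by simp)
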